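/- Let λ > 1 and 0 < ε ≤ 1/(1+λ), let A be the 2×2 real matrix [[1, λ], [λ, 1]], and let D(λ, ε) = (ε/2)·A ⊗ E00 + (1/2)·(I₂ − εA) ⊗ E11 be the 4×4 complex matrix, where E00 = e₀e₀† and E11 = e₁e₁† are the diagonal rank-one projectors onto the first and second basis vectors of ℂ². Then D(λ, ε) is Hermitian, its entries sum to 1, and ⟨u, D(λ, ε) u⟩ ≥ 0 for every 0/1 vector u ∈ ℂ⁴. That is, D(λ, ε) is a decoherence functional. -/

import Mathlib

open Matrix BigOperators ComplexOrder Kronecker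

/-- The 2×2 matrix `A = [[1, λ], [λ, 1]]`, viewed as a complex matrix. -/
noncomputable def Amat (lam : ℝ) : Matrix (Fin 2) (Fin 2) ℂ :=
  !![1, (lam : ℂ); (lam : ℂ), 1]

/-- The rank-one projector `E00 = e₀e₀†` on `ℂ²`. -/
def E00 : Matrix (Fin 2) (Fin 2) ℂ := !![1, 0; 0, 0]

/-- The rank-one projector `E11 = e₁e₁†` on `ℂ²`. -/
def E11 : Matrix (Fin 2) (Fin 2) ℂ := !![0, 0; 0, 1]

/-- The 4×4 matrix `D(λ, ε) = (ε/2)·A ⊗ E00 + (1/2)·(I₂ − εA) ⊗ E11`, with rows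
and columns indexed by pairs `(a, b) ∈ Fin 2 × Fin 2`. -/
noncomputable def Dmat (lam eps : ℝ) :
    Matrix (Fin 2 × Fin 2) (Fin 2 × Fin 2) ℂ :=
  ((eps / 2 : ℂ)) • (Amat lam ⊗ₖ E00) +
    ((1 / 2 : ℂ)) • ((1 - (eps : ℂ) • Amat lam) ⊗ₖ E11)

set_option maxHeartbeats 2000000 in
/-- For `λ > 1` and `0 < ε ≤ 1/(1+λ)`, the matrix `D(λ, ε)` is Hermitian, its
entries sum to `1`, and its quadratic form is a nonnegative real number at every
0/1 vector; i.e. `D(λ, ε)` is a decoherence functional. -/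
theorem Dmat_is_decoherence_functional (lam eps : ℝ)
    (hlam : 1 < lam) (heps : 0 < eps) (heps' : eps ≤ 1 / (1 + lam)) :
    (Dmat lam eps).IsHermitian ∧
    (∑ i, ∑ j, Dmat lam eps i j) = 1 ∧
    ∀ u : (Fin 2 × Fin 2) → ℂ, (∀ i, u i = 0 ∨ u i = 1) →
      0 ≤ star u ⬝ᵥ (Dmat lam eps).mulVec u := by
  refine ⟨?_, ?_, ?_⟩
  · ext i j
    fin_cases i <;> fin_cases j <;>
      simp [Dmat, Amat, E00, E11, conjTranspose_apply, Matrix.one_apply]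
  · simp [Dmat, Amat, E00, E11, Fintype.sum_prod_type, Fin.sum_univ_two,
      Matrix.one_apply]
    ring
  · intro u hu
    have h1 : 0 < 1 + lam := by linarith
    have key : eps * (1 + lam) ≤ 1 := by
      rw [le_div_iff₀ h1] at heps'; linarith
    simp only [dotProduct, mulVec, Dmat, Fintype.sum_prod_type, Fin.sum_univ_two,
      kroneckerMap_apply, Matrix.add_apply, Matrix.smul_apply, Matrix.sub_apply,
      Matrix.one_apply, Pi.star_apply]
    norm_num [Amat, E00, E11]
    rcases hu (0,0) with h00 | h00 <;> rcases hu (0,1) with h01 | h01 <;>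
      rcases hu (1,0) with h10 | h10 <;> rcases hu (1,1) with h11 | h11 <;>
      rw [h00, h01, h10, h11] <;>
      norm_num [Complex.le_def] <;>
      nlinarith [sq_nonneg eps, heps.le, hlam.le]
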